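/- Let K > 0 and let {X_t : t ∈ T} be a family of unital C*-algebras with br_K(X_t) ≤ n for every t. Then the ℓ∞-direct sum (product) ∏_{t∈T} X_t satisfies br_K(∏ X_t) ≤ n. -/

import Mathlib

open scoped ENNReal

/-- A tuple `(y_1,…,y_m)` of self-adjoint elements is `K`-unessential if for every rational
`δ > 0` there is a self-adjoint tuple `(z_1,…,z_m)` with `‖y_k - z_k‖ ≤ δ`, `∑ z_k²`
invertible, and `‖(∑ z_k²)⁻¹‖ ≤ 1/(K·δ²)`. -/
def KUnessential {A : Type*} [NormedRing A] [StarRing A] (K : ℝ) {m : ℕ}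
    (y : Fin m → A) : Prop :=
  ∀ δ : ℚ, 0 < δ → ∃ z : Fin m → A,
    (∀ k, IsSelfAdjoint (z k)) ∧ (∀ k, ‖y k - z k‖ ≤ (δ : ℝ)) ∧
    ∃ b : A, (∑ k, (z k) ^ 2) * b = 1 ∧ b * (∑ k, (z k) ^ 2) = 1 ∧
      ‖b‖ ≤ 1 / (K * (δ : ℝ) ^ 2)

/-- If `br_K(X_t) ≤ n` for each `t`, then the ℓ∞-direct sum `∏_{t ∈ T} X_t` (realized as
`lp X ∞`) satisfies `br_K(∏ X_t) ≤ n`. -/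
theorem stmt_12 {T : Type*} {X : T → Type*} [∀ t, CStarAlgebra (X t)]
    [∀ t, Nontrivial (X t)] (K : ℝ) (hK : 0 < K) (n : ℕ)
    (h : ∀ t, ∀ x : Fin (n + 1) → X t, (∀ k, IsSelfAdjoint (x k)) → ∀ ε : ℝ, 0 < ε →
      ∃ y : Fin (n + 1) → X t, (∀ k, IsSelfAdjoint (y k)) ∧ KUnessential K y ∧
        ∀ k, ‖x k - y k‖ < ε) :
    ∀ x : Fin (n + 1) → lp X ∞, (∀ k, IsSelfAdjoint (x k)) → ∀ ε : ℝ, 0 < ε →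
      ∃ y : Fin (n + 1) → lp X ∞, (∀ k, IsSelfAdjoint (y k)) ∧ KUnessential K y ∧
        ∀ k, ‖x k - y k‖ < ε := by
  intro x hx ε hε
  -- coordinatewise selfadjointness of x
  have hxsa : ∀ t, ∀ k, IsSelfAdjoint ((x k : ∀ t, X t) t) := by
    intro t k
    have := congrFun (congrArg (fun f : lp X ∞ => (f : ∀ t, X t)) (hx k)) t
    rw [lp.coeFn_star] at this
    exact this
  choose Y hYsa hYun hYclose using fun t => h t (fun k => (x k : ∀ t, X t) t) (hxsa t) (ε / 2) (by positivity)
  -- the family Y assembles into lp elements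
  have hYmem : ∀ k, Memℓp (fun t => Y t k) ∞ := by
    intro k
    apply memℓp_infty
    refine ⟨‖x k‖ + ε / 2, ?_⟩
    rintro - ⟨t, rfl⟩
    have h1 : ‖Y t k‖ ≤ ‖(x k : ∀ t, X t) t‖ + ‖(x k : ∀ t, X t) t - Y t k‖ := by
      simpa [norm_sub_rev] using norm_le_insert' (Y t k) ((x k : ∀ t, X t) t)
    have h2 := (hYclose t k).le
    have h3 := lp.norm_apply_le_norm ENNReal.top_ne_zero (x k) t
    simp only [Set.mem_setOf_eq]
    linarith
  set y : Fin (n + 1) → lp X ∞ := fun k => ⟨fun t => Y t k, hYmem k⟩ with hy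
  refine ⟨y, ?_, ?_, ?_⟩
  · -- selfadjoint
    intro k
    apply lp.ext
    funext t
    rw [lp.coeFn_star]
    exact (hYsa t k).star_eq
  · -- KUnessential
    intro δ hδ
    choose Z hZsa hZclose B hB1 hB2 hB3 using fun t => hYun t δ hδ
    have hZmem : ∀ k, Memℓp (fun t => Z t k) ∞ := by
      intro k
      apply memℓp_infty
      refine ⟨‖y k‖ + (δ : ℝ), ?_⟩
      rintro - ⟨t, rfl⟩
      have h1 : ‖Z t k‖ ≤ ‖Y t k‖ + ‖Y t k - Z t k‖ := by
        simpa [norm_sub_rev] using norm_le_insert' (Z t k) (Y t k)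
      have h3 : ‖Y t k‖ ≤ ‖y k‖ := lp.norm_apply_le_norm ENNReal.top_ne_zero (y k) t
      have h2 := hZclose t k
      simp only [Set.mem_setOf_eq]
      linarith
    have hBmem : Memℓp (fun t => B t) ∞ := by
      apply memℓp_infty
      exact ⟨1 / (K * (δ : ℝ) ^ 2), by rintro - ⟨t, rfl⟩; exact hB3 t⟩
    set z : Fin (n + 1) → lp X ∞ := fun k => ⟨fun t => Z t k, hZmem k⟩ with hz
    set b : lp X ∞ := ⟨fun t => B t, hBmem⟩ with hb
    have hsum : ((∑ k, (z k) ^ 2 : lp X ∞) : ∀ t, X t) = fun t => ∑ k, (Z t k) ^ 2 := by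
      funext t
      have := congrFun (lp.coeFn_sum (fun k => (z k) ^ 2) Finset.univ) t
      simp only [Finset.sum_apply] at this
      rw [this]
      refine Finset.sum_congr rfl fun k _ => ?_
      have := congrFun (lp.infty_coeFn_pow (z k) 2) t
      rw [this]
      rfl
    refine ⟨z, ?_, ?_, b, ?_, ?_, ?_⟩
    · intro k
      apply lp.ext
      funext t
      rw [lp.coeFn_star]
      exact (hZsa t k).star_eq
    · intro k
      apply lp.norm_le_of_forall_le (by positivity)
      intro t
      have : ((y k - z k : lp X ∞) : ∀ t, X t) t = Y t k - Z t k := by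
        simp [lp.coeFn_sub, hy, hz]
        rfl
      rw [this]
      exact hZclose t k
    · apply lp.ext
      funext t
      have h1 := congrFun (lp.infty_coeFn_mul (∑ k, (z k) ^ 2) b) t
      simp only [Pi.mul_apply] at h1
      rw [h1, congrFun hsum t]
      simpa [lp.infty_coeFn_one] using hB1 t
    · apply lp.ext
      funext t
      have h1 := congrFun (lp.infty_coeFn_mul b (∑ k, (z k) ^ 2)) t
      simp only [Pi.mul_apply] at h1
      rw [h1, congrFun hsum t]
      simpa [lp.infty_coeFn_one] using hB2 t
    · apply lp.norm_le_of_forall_le (by positivity)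
      intro t
      exact hB3 t
  · -- closeness
    intro k
    have : ‖x k - y k‖ ≤ ε / 2 := by
      apply lp.norm_le_of_forall_le (by positivity)
      intro t
      have hc : ((x k - y k : lp X ∞) : ∀ t, X t) t = (x k : ∀ t, X t) t - Y t k := by
        simp [lp.coeFn_sub, hy]
        rfl
      rw [hc]
      exact (hYclose t k).le
    linarith
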